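/- A group G generated by a finite invertible automaton is contracting if and only if the complete automaton A(G) contains only finitely many simple directed cycles. -/

import Mathlib

section Aux

variable {G X : Type*} [Group G] [Fintype X] [MulAction G X]

/-- Lists with entries in a finite set and bounded length form a finite set. -/
lemma auxFiniteLists {α : Type*} {N : Set α} (hN : N.Finite) (n : ℕ) :
    {l : List α | l.length ≤ n ∧ ∀ a ∈ l, a ∈ N}.Finite := by
  have : Finite ↥N := hN
  apply ((List.finite_length_le ↥N n).image (List.map Subtype.val)).subset
  rintro l ⟨hlen, hmem⟩
  refine ⟨l.attachWith (· ∈ N) hmem, ?_, ?_⟩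
  · simpa using hlen
  · simp

/-- Nodup lists with entries in a finite set form a finite set. -/
lemma auxFiniteNodup {α : Type*} {N : Set α} (hN : N.Finite) :
    {l : List α | l.Nodup ∧ ∀ a ∈ l, a ∈ N}.Finite := by
  classical
  apply (auxFiniteLists hN hN.toFinset.card).subset
  rintro l ⟨hnd, hmem⟩
  refine ⟨?_, hmem⟩
  rw [← List.toFinset_card_of_nodup hnd]
  exact Finset.card_le_card (by intro a ha; simp at ha; exact hN.mem_toFinset.2 (hmem a ha))

end Aux

section Aux
set_option linter.unusedSectionVars false
variable {G X : Type*} [Group G] [Fintype X] [MulAction G X] (resx : G → X → G) (S : Set G)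

/-- Products of `k` generators. -/
def auxP (k : ℕ) : Set G := {g | ∃ l : List G, l.length = k ∧ (∀ a ∈ l, a ∈ S) ∧ l.prod = g}

lemma auxPFinite (hS : S.Finite) (k : ℕ) : (auxP S k).Finite := by
  apply ((auxFiniteLists hS k).image List.prod).subset
  rintro g ⟨l, hlen, hmem, rfl⟩
  exact ⟨l, ⟨hlen.le, hmem⟩, rfl⟩

lemma auxResxOne (hcocycle : ∀ (g h : G) (x : X), resx (g * h) x = resx g (h • x) * resx h x)
    (x : X) : resx 1 x = 1 := by
  have := hcocycle 1 1 x
  simp only [one_mul, one_smul] at this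
  have h2 : resx 1 x * 1 = resx 1 x * resx 1 x := by rw [mul_one]; exact this
  exact (mul_left_cancel h2).symm

lemma auxResxP (hcocycle : ∀ (g h : G) (x : X), resx (g * h) x = resx g (h • x) * resx h x)
    (hclosed : ∀ s ∈ S, ∀ x : X, resx s x ∈ S) {k : ℕ} {g : G} (hg : g ∈ auxP S k) (x : X) :
    resx g x ∈ auxP S k := by
  rcases hg with ⟨l, hlen, hmem, rfl⟩
  subst hlen
  induction l generalizing x with
  | nil => exact ⟨[], rfl, by simp, by simp [auxResxOne resx hcocycle]⟩
  | cons a t IH =>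
    rw [List.prod_cons, hcocycle]
    rcases IH x (fun b hb => hmem b (List.mem_cons_of_mem a hb)) with ⟨m, hmlen, hmmem, hmprod⟩
    refine ⟨resx a (t.prod • x) :: m, by simp [hmlen], ?_, by simp [hmprod]⟩
    rintro b hb
    rcases List.mem_cons.1 hb with rfl | hb'
    · exact hclosed a (hmem a (List.mem_cons_self)) _
    · exact hmmem b hb'

lemma auxFoldlP (hcocycle : ∀ (g h : G) (x : X), resx (g * h) x = resx g (h • x) * resx h x)
    (hclosed : ∀ s ∈ S, ∀ x : X, resx s x ∈ S) {k : ℕ} (v : List X) {g : G} (hg : g ∈ auxP S k) :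
    List.foldl resx g v ∈ auxP S k := by
  induction v generalizing g with
  | nil => exact hg
  | cons x t IH => exact IH (auxResxP resx S hcocycle hclosed hg x)

lemma auxExistsP (hgen : Subgroup.closure S = ⊤) (hsymm : ∀ s ∈ S, s⁻¹ ∈ S) (g : G) :
    ∃ k, g ∈ auxP S k := by
  have hg : g ∈ Subgroup.closure S := hgen ▸ Subgroup.mem_top g
  induction hg using Subgroup.closure_induction with
  | mem s hs => exact ⟨1, [s], rfl, by simpa using hs, by simp⟩
  | one => exact ⟨0, [], rfl, by simp, by simp⟩
  | mul a b _ _ ha hb =>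
    rcases ha with ⟨k, l, hl, hls, rfl⟩
    rcases hb with ⟨k', m, hm, hms, rfl⟩
    exact ⟨k + k', l ++ m, by simp [hl, hm], by
      intro a ha; rcases List.mem_append.1 ha with h | h
      exacts [hls a h, hms a h], by simp⟩
  | inv a _ ha =>
    rcases ha with ⟨k, l, hl, hls, rfl⟩
    refine ⟨k, (l.map fun x => x⁻¹).reverse, by simp [hl], ?_, (List.prod_inv_reverse l).symm⟩
    intro a ha
    simp only [List.mem_reverse, List.mem_map] at ha
    rcases ha with ⟨b, hb, rfl⟩
    exact hsymm b (hls b hb)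

end Aux

section Aux
set_option linter.unusedSectionVars false
variable {G X : Type*} [Group G] [Fintype X] [MulAction G X] (resx : G → X → G)

/-- From the head of a chain, every member is reachable. -/
lemma auxE1 (l : List G) (a : G)
    (hc : List.Chain' (fun a b => ∃ x : X, resx a x = b) (a :: l)) :
    ∀ h ∈ a :: l, ∃ w : List X, List.foldl resx a w = h := by
  induction l generalizing a with
  | nil => rintro h hm; simp at hm; exact ⟨[], by simp [hm]⟩
  | cons b t IH =>
    rintro h hm
    rcases List.isChain_cons_cons.1 hc with ⟨⟨x, hx⟩, hc'⟩
    rcases List.mem_cons.1 hm with rfl | hm'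
    · exact ⟨[], rfl⟩
    · rcases IH b hc' h hm' with ⟨w, hw⟩
      exact ⟨x :: w, by simpa [hx] using hw⟩

/-- From any member of a chain, the last element is reachable. -/
lemma auxE2 (l : List G)
    (hc : List.Chain' (fun a b => ∃ x : X, resx a x = b) l) :
    ∀ h ∈ l, ∀ hne : l ≠ [], ∃ w : List X, List.foldl resx h w = l.getLast hne := by
  induction l with
  | nil => simp
  | cons a t IH =>
    rintro h hm hne
    cases t with
    | nil => simp at hm; exact ⟨[], by simp [hm]⟩
    | cons b t' =>
      rcases List.isChain_cons_cons.1 hc with ⟨⟨x, hx⟩, hc'⟩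
      rcases List.mem_cons.1 hm with rfl | hm'
      · rcases IH hc' b (by simp) (by simp) with ⟨w, hw⟩
        refine ⟨x :: w, ?_⟩
        rw [List.getLast_cons (by simp)]
        simpa [hx] using hw
      · rcases IH hc' h hm' (by simp) with ⟨w, hw⟩
        refine ⟨w, ?_⟩
        rw [List.getLast_cons (by simp)]
        exact hw

/-- Every vertex on a simple cycle returns to itself along a nonempty word. -/
lemma auxSelfReturn (c : List G) (hne : c ≠ []) (hch : List.Chain' (fun a b => ∃ x : X, resx a x = b) c)
    (hlast : ∃ x : X, resx (c.getLast hne) x = c.head hne) (h : G) (hm : h ∈ c) :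
    ∃ w : List X, w ≠ [] ∧ List.foldl resx h w = h := by
  rcases auxE2 resx c hch h hm hne with ⟨w1, hw1⟩
  rcases hlast with ⟨x, hx⟩
  have hc' : c = c.head hne :: c.tail := (List.cons_head_tail hne).symm
  rcases auxE1 resx c.tail (c.head hne) (hc' ▸ hch) h (hc' ▸ hm) with ⟨w2, hw2⟩
  refine ⟨w1 ++ x :: w2, by simp, ?_⟩
  rw [List.foldl_append]
  simpa [hw1, hx] using hw2

/-- Iterating a self-return word. -/
lemma auxRepeat (g : G) (w : List X) (hw : List.foldl resx g w = g) (k : ℕ) :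
    List.foldl resx g ((List.replicate k w).flatten) = g := by
  induction k with
  | zero => simp
  | succ n IH => rw [List.replicate_succ, List.flatten_cons, List.foldl_append, hw]; exact IH

end Aux

section Aux
set_option linter.unusedSectionVars false
variable {G X : Type*} [Group G] [Fintype X] [MulAction G X] (resx : G → X → G)

lemma auxMid (v : List X) (g : G) {i j : ℕ} (hij : i ≤ j) :
    List.foldl resx (List.foldl resx g (v.take i)) ((v.take j).drop i) =
      List.foldl resx g (v.take j) := by
  conv_rhs => rw [← List.take_append_drop i (v.take j)]
  rw [List.foldl_append, List.take_take, min_eq_left hij]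

/-- A closed walk in the automaton contains a vertex lying on a simple cycle,
reachable from the start along a prefix of the walk's word. -/
lemma auxCycle : ∀ (p : ℕ) (w : List X) (g : G), w.length = p → w ≠ [] →
    List.foldl resx g w = g →
    ∃ c : List G, c ≠ [] ∧ c.Nodup ∧
      c.Chain' (fun a b => ∃ x : X, resx a x = b) ∧
      (∀ hne : c ≠ [], ∃ x : X, resx (c.getLast hne) x = c.head hne) ∧
      ∃ (h : G) (u w' : List X), h ∈ c ∧ w = u ++ w' ∧ List.foldl resx g u = h := by
  intro p
  induction p using Nat.strong_induction_on with
  | _ p IH =>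
    intro w g hlen hne hret
    by_cases hdup : ∃ i j, i < j ∧ j < w.length ∧
        List.foldl resx g (w.take i) = List.foldl resx g (w.take j)
    · obtain ⟨i, j, hij, hjp, heq⟩ := hdup
      set mid := (w.take j).drop i with hmid
      have hmidlen : mid.length = j - i := by
        simp only [hmid, List.length_drop, List.length_take]
        omega
      have hmidne : mid ≠ [] := by
        intro h
        rw [h] at hmidlen
        simp at hmidlen
        omega
      have hmidret : List.foldl resx (List.foldl resx g (w.take i)) mid =
          List.foldl resx g (w.take i) := by
        rw [hmid, auxMid resx w g hij.le]
        exact heq.symm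
      obtain ⟨c, hc1, hc2, hc3, hc4, h, u, w'', hhc, hmid_eq, hfold⟩ :=
        IH (j - i) (by omega) mid _ hmidlen hmidne hmidret
      refine ⟨c, hc1, hc2, hc3, hc4, h, w.take i ++ u, w'' ++ w.drop j, hhc, ?_, ?_⟩
      · have h1 : w.take i ++ mid = w.take j := by
          conv_rhs => rw [← List.take_append_drop i (w.take j)]
          rw [List.take_take, min_eq_left hij.le]
        calc w = w.take j ++ w.drop j := (List.take_append_drop j w).symm
          _ = (w.take i ++ mid) ++ w.drop j := by rw [h1]
          _ = (w.take i ++ (u ++ w'')) ++ w.drop j := by rw [← hmid_eq]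
          _ = (w.take i ++ u) ++ (w'' ++ w.drop j) := by simp [List.append_assoc]
      · rw [List.foldl_append]
        exact hfold
    · push_neg at hdup
      obtain ⟨n, hpn⟩ : ∃ n, p = n + 1 := by
        cases p with
        | zero => exact absurd (List.length_eq_zero_iff.1 hlen) hne
        | succ n => exact ⟨n, rfl⟩
      subst hpn
      set f : ℕ → G := fun i => List.foldl resx g (w.take i) with hf
      have hstep : ∀ i (hi : i < w.length), resx (f i) (w[i]'hi) = f (i + 1) := by
        intro i hi
        have : w.take (i + 1) = w.take i ++ [w[i]] := by
          rw [List.take_succ]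
          simp [List.getElem?_eq_getElem hi]
        simp only [hf, this, List.foldl_append, List.foldl_cons, List.foldl_nil]
      refine ⟨(List.range (n + 1)).map f, by simp, ?_, ?_, ?_, g, [], w, ?_, by simp, by simp⟩
      · refine List.Nodup.map_on ?_ List.nodup_range
        intro a ha b hb hab
        simp only [List.mem_range] at ha hb
        by_contra hne'
        rcases Nat.lt_or_ge a b with h' | h'
        · exact hdup a b h' (by omega) hab
        · exact hdup b a (by omega) (by omega) hab.symm
      · change List.IsChain _ _
        rw [List.isChain_map, List.isChain_range_succ]
        intro i hi
        exact ⟨w[i]'(by omega), hstep i (by omega)⟩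
      · intro hne'
        refine ⟨w[n]'(by omega), ?_⟩
        have hlast : ((List.range (n + 1)).map f).getLast hne' = f n := by
          rw [List.getLast_eq_getElem]
          simp
        have hhead : ((List.range (n + 1)).map f).head hne' = f 0 := by
          rw [List.head_eq_getElem_zero]
          simp
        rw [hlast, hhead]
        rw [hstep n (by omega)]
        have : f (n + 1) = g := by
          simp only [hf]
          rw [← hlen, List.take_length]
          exact hret
        rw [this]
        simp [hf]
      · refine List.mem_map.2 ⟨0, by simp, by simp [hf]⟩
end Aux

/-- A group `G` generated by a finite invertible automaton (i.e. by a finite symmetric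
self-similar set `S`, acting self-similarly on words over `X` with restriction `resx`)
is contracting if and only if the complete automaton `A(G)` (states `G`, arrows
`g → g|_x`) contains only finitely many simple directed cycles. -/
theorem stmt11 {G X : Type*} [Group G] [Fintype X] [MulAction G X]
    (resx : G → X → G)
    (hcocycle : ∀ (g h : G) (x : X), resx (g * h) x = resx g (h • x) * resx h x)
    (S : Set G) (hSfin : S.Finite) (hgen : Subgroup.closure S = ⊤)
    (hsymm : ∀ s ∈ S, s⁻¹ ∈ S)
    (hclosed : ∀ s ∈ S, ∀ x : X, resx s x ∈ S) :
    (∃ N : Set G, N.Finite ∧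
        ∀ g : G, ∃ n : ℕ, ∀ v : List X, n ≤ v.length → v.foldl resx g ∈ N) ↔
      {c : List G | c ≠ [] ∧ c.Nodup ∧
        c.Chain' (fun a b => ∃ x : X, resx a x = b) ∧
        ∀ h : c ≠ [], ∃ x : X, resx (c.getLast h) x = c.head h}.Finite := by
  
  constructor
  · rintro ⟨N, hNfin, hN⟩
    apply (auxFiniteNodup hNfin).subset
    rintro c ⟨hne, hnd, hch, hlast⟩
    refine ⟨hnd, fun h hm => ?_⟩
    obtain ⟨w, hwne, hwret⟩ := auxSelfReturn resx c hne hch (hlast hne) h hm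
    obtain ⟨n, hn⟩ := hN h
    have hwlen : 1 ≤ w.length := List.length_pos_iff.2 hwne
    have hlen : n ≤ ((List.replicate n w).flatten).length := by
      rw [List.length_flatten]
      simp only [List.map_replicate, List.sum_replicate, smul_eq_mul]
      exact Nat.le_mul_of_pos_right n hwlen
    have := hn ((List.replicate n w).flatten) hlen
    rwa [auxRepeat resx h w hwret n] at this
  · intro hfin
    set R : Set G := {h | ∃ c ∈ {c : List G | c ≠ [] ∧ c.Nodup ∧
        c.Chain' (fun a b => ∃ x : X, resx a x = b) ∧
        ∀ hh : c ≠ [], ∃ x : X, resx (c.getLast hh) x = c.head hh}, h ∈ c} with hR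
    have hRfin : R.Finite := by
      apply (hfin.biUnion (fun c _ => c.finite_toSet)).subset
      rintro h ⟨c, hc, hm⟩
      exact Set.mem_biUnion hc hm
    choose k hk using auxExistsP S hgen hsymm
    set N : Set G := {h | ∃ r ∈ R, ∃ v : List X, List.foldl resx r v = h} with hNdef
    have hNfin : N.Finite := by
      apply (hRfin.biUnion (fun r (_ : r ∈ R) => auxPFinite S hSfin (k r))).subset
      rintro h ⟨r, hr, v, rfl⟩
      exact Set.mem_biUnion hr (auxFoldlP resx S hcocycle hclosed v (hk r))
    refine ⟨N, hNfin, fun g => ?_⟩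
    set T := auxP S (k g) with hTdef
    have hTfin : T.Finite := auxPFinite S hSfin (k g)
    set M := hTfin.toFinset.card with hM
    refine ⟨M + 1, fun v hv => ?_⟩
    set f : ℕ → G := fun i => List.foldl resx g (v.take i) with hf
    have hmaps : ∀ i ∈ Finset.range (M + 1), f i ∈ hTfin.toFinset := by
      intro i _
      rw [Set.Finite.mem_toFinset]
      exact auxFoldlP resx S hcocycle hclosed _ (hk g)
    obtain ⟨a, ha, b, hb, hab, hfab⟩ :=
      Finset.exists_ne_map_eq_of_card_lt_of_maps_to (by simp [hM]) hmaps
    simp only [Finset.mem_range] at ha hb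
    -- wlog a < b
    obtain ⟨a, b, hlt, hble, hfeq⟩ : ∃ a b : ℕ, a < b ∧ b ≤ v.length ∧ f a = f b := by
      rcases lt_or_gt_of_ne hab with h' | h'
      · exact ⟨a, b, h', by omega, hfab⟩
      · exact ⟨b, a, h', by omega, hfab.symm⟩
    set mid := (v.take b).drop a with hmid
    have hmidlen : mid.length = b - a := by
      simp only [hmid, List.length_drop, List.length_take]
      omega
    have hmidne : mid ≠ [] := by
      intro h
      rw [h] at hmidlen
      simp at hmidlen
      omega
    have hmidret : List.foldl resx (f a) mid = f a := by
      rw [hmid, hf, auxMid resx v g hlt.le]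
      exact hfeq.symm
    obtain ⟨c, hc1, hc2, hc3, hc4, h, u, w', hhc, hmideq, hfold⟩ :=
      auxCycle resx (b - a) mid (f a) hmidlen hmidne hmidret
    have hhR : h ∈ R := ⟨c, ⟨hc1, hc2, hc3, hc4⟩, hhc⟩
    have hveq : v = (v.take a ++ u) ++ (w' ++ v.drop b) := by
      have h1 : v.take a ++ mid = v.take b := by
        conv_rhs => rw [← List.take_append_drop a (v.take b)]
        rw [List.take_take, min_eq_left hlt.le]
      calc v = v.take b ++ v.drop b := (List.take_append_drop b v).symm
        _ = (v.take a ++ mid) ++ v.drop b := by rw [h1]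
        _ = (v.take a ++ (u ++ w')) ++ v.drop b := by rw [← hmideq]
        _ = (v.take a ++ u) ++ (w' ++ v.drop b) := by simp [List.append_assoc]
    refine ⟨h, hhR, w' ++ v.drop b, ?_⟩
    conv_rhs => rw [hveq]
    have hfold' : List.foldl resx (List.foldl resx g (v.take a)) u = h := hfold
    simp only [List.foldl_append]
    rw [hfold']
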